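/- For every n ≥ 0, the identity Σ_{T∈𝒜_{n+1}} u^{oleaf(T)} v^{yleaf(T)} = Σ_{k=0}^{⌊n/2⌋} binom(n, 2k) · C_k · u^{k+1} v^{n−2k} holds in ℤ[u,v], where 𝒜_m is the set of tip-augmented plane trees with m edges (plane trees with no young internal node) and C_k = binom(2k,k)/(k+1) is the k-th Catalan number. -/

import Mathlib

/-- Labeled plane trees: a node with a label in `ℕ` and a (left-to-right ordered)
list of children. -/
inductive LTree : Type where
  | node : ℕ → List LTree → LTree

namespace LTree

/-- The label of the root. -/
def label : LTree → ℕ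
  | node a _ => a

/-- The list of children of the root, from left to right. -/
def children : LTree → List LTree
  | node _ cs => cs

/-- A tree consisting of a single node is a leaf. -/
def isLeaf (t : LTree) : Bool := t.children.isEmpty

/-- The list of all subtrees (i.e. all nodes) of a tree. -/
def subtrees : LTree → List LTree
  | node a cs => node a cs :: (cs.attach.map (fun c => subtrees c.1)).flatten
decreasing_by
  simp only [LTree.node.sizeOf_spec]
  have := List.sizeOf_lt_of_mem c.2
  omega

/-- The multiset of labels of all nodes of a tree. -/
def labels (T : LTree) : Multiset ℕ := (T.subtrees.map label : List ℕ)

/-- `T` is a weakly increasing tree on the multiset `M`: the root is labeled `0`,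
the multiset of labels is `M ∪ {0}`, labels weakly increase along root-to-leaf paths,
and the labels of the children of each node weakly increase from right to left. -/
def IsWIT (M : Multiset ℕ) (T : LTree) : Prop :=
  T.label = 0 ∧ T.labels = 0 ::ₘ M ∧
  ∀ t ∈ T.subtrees, (∀ c ∈ t.children, t.label ≤ c.label) ∧
    List.Chain' (fun a b => b ≤ a) (t.children.map label)

/-- `T` is (an encoding of) a plane tree with `n` edges: all labels are zero
and there are `n + 1` nodes. -/
def IsPlane (n : ℕ) (T : LTree) : Prop :=
  (∀ t ∈ T.subtrees, t.label = 0) ∧ T.subtrees.length = n + 1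

/-- The number of singleton leaves: leaves that are the only child of their parent. -/
def sleaf (T : LTree) : ℕ :=
  T.subtrees.countP (fun t => match t.children with
    | [c] => c.isLeaf
    | _ => false)

/-- The number of elder leaves: leaves that are the leftmost child of their parent
and have siblings. -/
def eleaf (T : LTree) : ℕ :=
  T.subtrees.countP (fun t => match t.children with
    | c :: _ :: _ => c.isLeaf
    | _ => false)

/-- The number of young leaves: leaves that are not the leftmost child of their parent. -/
def yleaf (T : LTree) : ℕ :=
  (T.subtrees.map (fun t => t.children.tail.countP isLeaf)).sum

/-- The number of young internal nodes: internal nodes whose leftmost child is internal. -/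
def yint (T : LTree) : ℕ :=
  T.subtrees.countP (fun t => match t.children with
    | c :: _ => !c.isLeaf
    | _ => false)

/-- The number of singleton internal nodes: parents of a singleton leaf. -/
def sint (T : LTree) : ℕ :=
  T.subtrees.countP (fun t => match t.children with
    | [c] => c.isLeaf
    | _ => false)

/-- The number of elder internal nodes: parents of an elder leaf. -/
def eint (T : LTree) : ℕ :=
  T.subtrees.countP (fun t => match t.children with
    | c :: _ :: _ => c.isLeaf
    | _ => false)

/-- The number of old leaves: leaves that are the leftmost child of their parent. -/
def oleaf (T : LTree) : ℕ := sleaf T + eleaf T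

/-- The number of old internal nodes. -/
def oint (T : LTree) : ℕ := sint T + eint T

end LTree


namespace LTree

open MvPolynomial Finset

lemma subtrees_node (a : ℕ) (cs : List LTree) :
    subtrees (node a cs) = node a cs :: (cs.map subtrees).flatten := by
  rw [subtrees]; congr 1; simp [List.attach_map_val]

lemma countP_subtrees (p : LTree → Bool) (a : ℕ) (cs : List LTree) :
    (subtrees (node a cs)).countP p
      = ((if p (node a cs) then 1 else 0) + (cs.map (fun c => (subtrees c).countP p)).sum) := by
  rw [subtrees_node, List.countP_cons]
  have : ∀ L : List (List LTree), L.flatten.countP p = (L.map (List.countP p)).sum := by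
    intro L; induction L with
    | nil => simp
    | cons h t ih => simp [List.countP_append, ih]
  rw [this]
  simp only [List.map_map, Function.comp_def]
  split <;> omega

lemma mapsum_subtrees (f : LTree → ℕ) (a : ℕ) (cs : List LTree) :
    ((subtrees (node a cs)).map f).sum
      = f (node a cs) + (cs.map (fun c => ((subtrees c).map f).sum)).sum := by
  rw [subtrees_node]
  simp only [List.map_cons, List.sum_cons]
  congr 1
  induction cs with
  | nil => simp
  | cons h t ih => simp only [List.map_cons, List.flatten_cons, List.map_append,
      List.sum_append, List.sum_cons, ih]

lemma length_subtrees (a : ℕ) (cs : List LTree) :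
    (subtrees (node a cs)).length = 1 + (cs.map (fun c => (subtrees c).length)).sum := by
  have := mapsum_subtrees (fun _ => 1) a cs
  simpa using this

lemma length_subtrees_pos (T : LTree) : 1 ≤ T.subtrees.length := by
  cases T with | node a cs => rw [length_subtrees]; omega

lemma self_mem_subtrees (T : LTree) : T ∈ T.subtrees := by
  cases T with | node a cs => rw [subtrees_node]; exact List.mem_cons_self

lemma mem_subtrees_trans {t c : LTree} {a : ℕ} {cs : List LTree} (hc : c ∈ cs)
    (ht : t ∈ c.subtrees) : t ∈ (node a cs).subtrees := by
  rw [subtrees_node]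
  exact List.mem_cons_of_mem _ (List.mem_flatten.mpr ⟨c.subtrees, List.mem_map_of_mem hc, ht⟩)

lemma yint_node (a : ℕ) (cs : List LTree) :
    yint (node a cs) = (if (match cs with | c :: _ => !c.isLeaf | _ => false) then 1 else 0)
      + (cs.map yint).sum := by
  rw [yint, countP_subtrees]
  rfl

def leafT : LTree := node 0 []

lemma subtrees_leafT : subtrees leafT = [leafT] := by
  rw [leafT, subtrees_node]; simp

lemma yint_leafT : yint leafT = 0 := by
  rw [leafT, yint_node]; simp

lemma isLeaf_leafT : isLeaf leafT = true := rfl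

noncomputable instance : DecidableEq LTree := Classical.decEq _
noncomputable instance : DecidableEq (List LTree) := Classical.decEq _

mutual
noncomputable def Bset : ℕ → Finset LTree
  | 0 => {leafT}
  | m+1 => (Lset m).image (fun cs => LTree.node 0 (leafT :: cs))
  termination_by m => 2*m
  decreasing_by omega
noncomputable def Lset : ℕ → Finset (List LTree)
  | 0 => {[]}
  | e+1 => (Finset.range (e+1)).attach.biUnion
      (fun c => ((Bset c.1) ×ˢ (Lset (e - c.1))).image (fun p => p.1 :: p.2))
  termination_by e => 2*e+1
  decreasing_by
  · have := Finset.mem_range.mp c.2; omega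
  · omega
end

theorem memBL (m : ℕ) :
    (∀ T, T ∈ Bset m ↔ ((∀ t ∈ T.subtrees, t.label = 0) ∧ T.subtrees.length = m + 1 ∧ yint T = 0))
    ∧ (∀ cs : List LTree, cs ∈ Lset m ↔ ((cs.map (fun c => c.subtrees.length)).sum = m ∧
        ∀ c ∈ cs, (∀ t ∈ c.subtrees, t.label = 0) ∧ yint c = 0)) := by
  induction m using Nat.strong_induction_on with
  | _ m IH =>
  constructor
  · intro T
    match m with
    | 0 =>
      rw [Bset]
      simp only [Finset.mem_singleton]
      constructor
      · rintro rfl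
        refine ⟨?_, by rw [subtrees_leafT]; rfl, yint_leafT⟩
        rw [subtrees_leafT]; rintro t ht
        simp only [List.mem_singleton] at ht; subst ht; rfl
      · rintro ⟨hz, hl, -⟩
        cases T with | node a cs =>
        rw [length_subtrees] at hl
        have hcs : cs = [] := by
          cases cs with
          | nil => rfl
          | cons c cs' =>
            exfalso
            have := length_subtrees_pos c
            simp only [List.map_cons, List.sum_cons] at hl
            omega
        subst hcs
        have := hz _ (self_mem_subtrees _)
        rw [label] at this
        subst this; rfl
    | m'+1 =>
      rw [Bset]
      simp only [Finset.mem_image]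
      constructor
      · rintro ⟨cs, hcs, rfl⟩
        rw [(IH m' (by omega)).2] at hcs
        obtain ⟨hsum, hprop⟩ := hcs
        refine ⟨?_, ?_, ?_⟩
        · intro t ht
          rw [subtrees_node] at ht
          rcases List.mem_cons.mp ht with rfl | ht
          · rfl
          · rcases List.mem_flatten.mp ht with ⟨l, hl, htl⟩
            rcases List.mem_map.mp hl with ⟨c, hc, rfl⟩
            rcases List.mem_cons.mp hc with rfl | hc
            · rw [subtrees_leafT] at htl
              simp only [List.mem_singleton] at htl; subst htl; rfl
            · exact (hprop c hc).1 t htl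
        · rw [length_subtrees]
          simp only [List.map_cons, List.sum_cons, subtrees_leafT]
          simp only [List.length_singleton]
          omega
        · rw [yint_node]
          simp only [isLeaf_leafT, Bool.not_true, if_neg, List.map_cons, List.sum_cons,
            yint_leafT]
          have : (cs.map yint).sum = 0 := by
            rw [List.sum_eq_zero]
            intro x hx
            rcases List.mem_map.mp hx with ⟨c, hc, rfl⟩
            exact (hprop c hc).2
          simp [this]
      · rintro ⟨hz, hl, hy⟩
        cases T with | node a cs0 =>
        have ha : a = 0 := hz _ (self_mem_subtrees _)
        subst ha
        rw [length_subtrees] at hl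
        cases cs0 with
        | nil => exfalso; simp only [List.map_nil, List.sum_nil] at hl; omega
        | cons c0 cs =>
          rw [yint_node] at hy
          simp only [List.map_cons, List.sum_cons] at hy hl
          have hyc0 : yint c0 = 0 := by omega
          have hycs : ∀ c ∈ cs, yint c = 0 := by
            intro c hc
            have : (cs.map yint).sum = 0 := by omega
            have := (List.sum_eq_zero_iff.mp this) (yint c) (List.mem_map_of_mem hc)
            exact this
          have hleaf : c0.isLeaf = true := by
            by_contra h
            simp only [Bool.not_eq_true] at h
            simp only [h, Bool.not_false, if_pos] at hy
            omega
          have hc0 : c0 = leafT := by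
            cases c0 with | node b ds =>
            have hds : ds = [] := by
              rw [isLeaf] at hleaf
              simpa [children] using hleaf
            subst hds
            have : b = 0 := by
              have := hz _ (mem_subtrees_trans (List.mem_cons_self)
                (self_mem_subtrees (node b [])))
              rwa [label] at this
            rw [this]; rfl
          subst hc0
          refine ⟨cs, ?_, rfl⟩
          rw [(IH m' (by omega)).2]
          constructor
          · rw [subtrees_leafT] at hl
            simp only [List.length_singleton] at hl
            omega
          · intro c hc
            exact ⟨fun t ht => hz t (mem_subtrees_trans (List.mem_cons_of_mem _ hc) ht),
              hycs c hc⟩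
  · intro cs
    match m with
    | 0 =>
      rw [Lset]
      simp only [Finset.mem_singleton]
      constructor
      · rintro rfl; simp
      · rintro ⟨hsum, -⟩
        cases cs with
        | nil => rfl
        | cons c cs' =>
          exfalso
          have := length_subtrees_pos c
          simp only [List.map_cons, List.sum_cons] at hsum
          omega
    | e+1 =>
      rw [Lset]
      simp only [Finset.mem_biUnion, Finset.mem_attach, true_and, Subtype.exists,
        Finset.mem_image, Finset.mem_product, Finset.mem_range]
      constructor
      · rintro ⟨j, hj, ⟨t, l⟩, ⟨htB, hlL⟩, rfl⟩
        have hB := ((IH j (by omega)).1 t).mp htB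
        have hL := ((IH (e - j) (by omega)).2 l).mp hlL
        constructor
        · simp only [List.map_cons, List.sum_cons, hB.2.1, hL.1]
          omega
        · rintro c hc
          rcases List.mem_cons.mp hc with rfl | hc
          · exact ⟨hB.1, hB.2.2⟩
          · exact hL.2 c hc
      · rintro ⟨hsum, hprop⟩
        cases cs with
        | nil => simp at hsum
        | cons t l =>
          simp only [List.map_cons, List.sum_cons] at hsum
          have h1 := length_subtrees_pos t
          set j := t.subtrees.length - 1 with hj
          have hjl : j < e + 1 := by omega
          have hlen : (l.map (fun c => c.subtrees.length)).sum = e - j := by omega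
          refine ⟨j, hjl, ⟨t, l⟩, ⟨?_, ?_⟩, rfl⟩
          · dsimp only
            rw [(IH j (by omega)).1]
            exact ⟨(hprop t (List.mem_cons_self)).1, by omega,
              (hprop t (List.mem_cons_self)).2⟩
          · dsimp only
            rw [(IH (e - j) (by omega)).2]
            exact ⟨hlen, fun c hc => hprop c (List.mem_cons_of_mem _ hc)⟩

lemma oleaf_leafT : oleaf leafT = 0 := by
  rw [oleaf, sleaf, eleaf, subtrees_leafT]; rfl

lemma yleaf_leafT : yleaf leafT = 0 := by
  rw [yleaf, subtrees_leafT]; rfl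

lemma sum_map_add (f g : LTree → ℕ) (l : List LTree) :
    (l.map (fun c => f c + g c)).sum = (l.map f).sum + (l.map g).sum := by
  induction l with
  | nil => rfl
  | cons h t ih => simp only [List.map_cons, List.sum_cons, ih]; omega

lemma sleaf_special (cs : List LTree) :
    sleaf (node 0 (leafT :: cs)) = (if cs.isEmpty then 1 else 0) + (cs.map sleaf).sum := by
  rw [sleaf, countP_subtrees]
  have hbridge : List.map (fun c => (subtrees c).countP (fun t => match t.children with
    | [c] => c.isLeaf
    | _ => false)) (leafT :: cs) = List.map sleaf (leafT :: cs) := rfl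
  rw [hbridge]
  simp only [List.map_cons, List.sum_cons]
  have h0 : sleaf leafT = 0 := by rw [sleaf, subtrees_leafT]; rfl
  rw [h0]
  cases cs with
  | nil =>
    have hc : (match (node 0 [leafT]).children with
      | [c] => c.isLeaf
      | _ => false) = true := rfl
    rw [hc]; simp
  | cons c cs' =>
    have hc : (match (node 0 (leafT :: c :: cs')).children with
      | [c] => c.isLeaf
      | _ => false) = false := rfl
    rw [hc]; simp

lemma eleaf_special (cs : List LTree) :
    eleaf (node 0 (leafT :: cs)) = (if cs.isEmpty then 0 else 1) + (cs.map eleaf).sum := by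
  rw [eleaf, countP_subtrees]
  have hbridge : List.map (fun c => (subtrees c).countP (fun t => match t.children with
    | c :: _ :: _ => c.isLeaf
    | _ => false)) (leafT :: cs) = List.map eleaf (leafT :: cs) := rfl
  rw [hbridge]
  simp only [List.map_cons, List.sum_cons]
  have h0 : eleaf leafT = 0 := by rw [eleaf, subtrees_leafT]; rfl
  rw [h0]
  cases cs with
  | nil =>
    have hc : (match (node 0 [leafT]).children with
      | c :: _ :: _ => c.isLeaf
      | _ => false) = false := rfl
    rw [hc]; simp
  | cons c cs' =>
    have hc : (match (node 0 (leafT :: c :: cs')).children with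
      | c :: _ :: _ => c.isLeaf
      | _ => false) = true := rfl
    rw [hc]; simp

lemma oleaf_special (cs : List LTree) :
    oleaf (node 0 (leafT :: cs)) = 1 + (cs.map oleaf).sum := by
  rw [oleaf, sleaf_special, eleaf_special]
  have : List.map oleaf cs = List.map (fun c => sleaf c + eleaf c) cs := rfl
  rw [this, sum_map_add]
  cases cs <;> simp <;> omega

lemma yleaf_special (cs : List LTree) :
    yleaf (node 0 (leafT :: cs)) = cs.countP isLeaf + (cs.map yleaf).sum := by
  rw [yleaf, mapsum_subtrees]
  have hbridge : List.map (fun c => ((subtrees c).map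
      (fun t => t.children.tail.countP isLeaf)).sum) (leafT :: cs)
      = List.map yleaf (leafT :: cs) := rfl
  rw [hbridge]
  simp only [List.map_cons, List.sum_cons, yleaf_leafT]
  have hroot : (node 0 (leafT :: cs)).children.tail.countP isLeaf = cs.countP isLeaf := rfl
  rw [hroot]
  omega

open MvPolynomial

noncomputable def w (t : LTree) : MvPolynomial (Fin 2) ℤ :=
  (X 0) ^ oleaf t * (X 1) ^ (yleaf t + if isLeaf t then 1 else 0)

noncomputable def Q (e : ℕ) : MvPolynomial (Fin 2) ℤ := ∑ cs ∈ Lset e, (cs.map w).prod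

lemma countP_eq_sum_map (p : LTree → Bool) (l : List LTree) :
    l.countP p = (l.map (fun c => if p c then 1 else 0)).sum := by
  induction l with
  | nil => rfl
  | cons h t ih =>
    rw [List.countP_cons]
    simp only [List.map_cons, List.sum_cons, ih]
    split <;> omega

lemma prod_w (cs : List LTree) : (cs.map w).prod
    = (X 0 : MvPolynomial (Fin 2) ℤ) ^ ((cs.map oleaf).sum)
      * (X 1) ^ ((cs.map (fun c => yleaf c + if isLeaf c then 1 else 0)).sum) := by
  induction cs with
  | nil => simp
  | cons h t ih =>
    simp only [List.map_cons, List.prod_cons, List.sum_cons, ih, w, pow_add]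
    ring

lemma w_special (cs : List LTree) :
    w (node 0 (leafT :: cs)) = (X 0 : MvPolynomial (Fin 2) ℤ) * (cs.map w).prod := by
  rw [w, prod_w, oleaf_special, yleaf_special]
  have hL : isLeaf (node 0 (leafT :: cs)) = false := rfl
  rw [hL]
  have : (cs.map (fun c => yleaf c + if isLeaf c then 1 else 0)).sum
      = (cs.map yleaf).sum + cs.countP isLeaf := by
    rw [sum_map_add, countP_eq_sum_map]
  rw [this]
  simp only [if_neg Bool.false_ne_true, add_zero, pow_add]
  ring

lemma Bsum_zero : ∑ t ∈ Bset 0, w t = (X 1 : MvPolynomial (Fin 2) ℤ) := by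
  rw [Bset, Finset.sum_singleton, w, oleaf_leafT, yleaf_leafT, isLeaf_leafT]
  simp

lemma Bsum_succ (m : ℕ) : ∑ t ∈ Bset (m+1), w t = (X 0 : MvPolynomial (Fin 2) ℤ) * Q m := by
  rw [Bset]
  rw [Finset.sum_image (by intro x hx y hy h; simpa using h)]
  rw [Q, Finset.mul_sum]
  exact Finset.sum_congr rfl fun cs _ => w_special cs

lemma Q_zero : Q 0 = 1 := by
  rw [Q, Lset]; simp

lemma nn_of_mem_Bset {t : LTree} {c : ℕ} (h : t ∈ Bset c) : t.subtrees.length = c + 1 :=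
  (((memBL c).1 t).mp h).2.1

lemma Q_succ (e : ℕ) :
    Q (e+1) = ∑ c ∈ Finset.range (e+1), (∑ t ∈ Bset c, w t) * Q (e - c) := by
  rw [Q, Lset]
  rw [Finset.sum_biUnion ?hd]
  case hd =>
    intro x _ y _ hxy
    simp only [Function.onFun]
    rw [Finset.disjoint_left]
    rintro l hx hy
    apply hxy
    simp only [Finset.mem_image, Finset.mem_product] at hx hy
    obtain ⟨⟨t, l1⟩, ⟨ht, -⟩, rfl⟩ := hx
    obtain ⟨⟨s, l2⟩, ⟨hs, -⟩, h⟩ := hy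
    simp only [List.cons.injEq] at h
    have h1 := nn_of_mem_Bset ht
    have h2 := nn_of_mem_Bset hs
    rw [h.1] at h2
    refine Subtype.ext ?_
    have : (x : ℕ) + 1 = (y : ℕ) + 1 := by rw [← h1, ← h2]
    omega
  rw [← Finset.sum_attach (Finset.range (e+1))
    (fun c => (∑ t ∈ Bset c, w t) * Q (e - c))]
  refine Finset.sum_congr rfl fun c _ => ?_
  rw [Finset.sum_image (by rintro ⟨t, l1⟩ _ ⟨s, l2⟩ _ h; simpa using h)]
  rw [Finset.sum_product, Q, Finset.sum_mul]
  refine Finset.sum_congr rfl fun t _ => ?_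
  rw [Finset.mul_sum]
  refine Finset.sum_congr rfl fun l _ => ?_
  simp [List.prod_cons]


def cc (n k : ℕ) : ℕ := n.choose (2*k) * catalan k

noncomputable def Rp (n : ℕ) : MvPolynomial (Fin 2) ℤ :=
  ∑ k ∈ range (n/2 + 1), ((cc n k : ℕ) : MvPolynomial (Fin 2) ℤ) * X 0 ^ k * X 1 ^ (n - 2*k)

lemma cc_zero_of (n k : ℕ) (h : n < 2*k) : cc n k = 0 := by
  rw [cc, Nat.choose_eq_zero_of_lt h, zero_mul]

lemma hockey (m r : ℕ) : ∑ i ∈ range (m+1), (i.choose r) = (m+1).choose (r+1) := by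
  induction m with
  | zero =>
    rw [Finset.sum_range_one]
    cases r with
    | zero => rfl
    | succ r' => rw [Nat.choose_zero_succ, Nat.choose_eq_zero_of_lt (by omega)]
  | succ m ih =>
    rw [Finset.sum_range_succ, ih, Nat.choose_succ_succ (m+1) r]
    simp only [Nat.succ_eq_add_one]
    omega

lemma vandermonde (m r s : ℕ) :
    ∑ i ∈ range (m+1), (i.choose r) * ((m - i).choose s) = (m+1).choose (r+s+1) := by
  induction m generalizing s with
  | zero =>
    rw [Finset.sum_range_one, Nat.zero_sub]
    cases r with
    | zero =>
      cases s with
      | zero => rfl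
      | succ s' =>
        rw [Nat.choose_zero_succ, mul_zero]
        exact (Nat.choose_eq_zero_of_lt (by omega)).symm
    | succ r' =>
      rw [Nat.choose_zero_succ, zero_mul]
      exact (Nat.choose_eq_zero_of_lt (by omega)).symm
  | succ m ih =>
    cases s with
    | zero => simpa using hockey (m+1) r
    | succ s' =>
      rw [Finset.sum_range_succ, Nat.sub_self, Nat.choose_zero_succ, mul_zero, add_zero]
      have : ∀ i ∈ range (m+1), (i.choose r) * ((m + 1 - i).choose (s'+1))
          = (i.choose r) * ((m - i).choose s') + (i.choose r) * ((m - i).choose (s'+1)) := by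
        intro i hi
        rw [mem_range] at hi
        rw [show m + 1 - i = (m - i) + 1 from by omega, Nat.choose_succ_succ, mul_add]
      rw [Finset.sum_congr rfl this, Finset.sum_add_distrib, ih s', ih (s'+1)]
      rw [show r + (s'+1) + 1 = (r + s' + 1) + 1 from by omega,
        Nat.choose_succ_succ (m+1) (r+s'+1)]

lemma Dval (e k : ℕ) :
    ∑ i ∈ range e, ∑ a ∈ range (k+1), (cc i a) * (cc (e-1-i) (k-a))
      = e.choose (2*k+1) * catalan (k+1) := by
  cases e with
  | zero => simp [Nat.choose_zero_succ]
  | succ m =>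
    rw [Finset.sum_comm]
    have h1 : ∀ a ∈ range (k+1), ∑ i ∈ range (m+1), (cc i a) * (cc (m+1-1-i) (k-a))
        = (catalan a * catalan (k-a)) * (m+1).choose (2*k+1) := by
      intro a ha
      rw [mem_range] at ha
      have : ∀ i ∈ range (m+1), (cc i a) * (cc (m+1-1-i) (k-a))
          = (catalan a * catalan (k-a)) * ((i.choose (2*a)) * ((m-i).choose (2*(k-a)))) := by
        intro i hi
        rw [cc, cc, show m+1-1-i = m - i from by omega]
        ring
      rw [Finset.sum_congr rfl this, ← Finset.mul_sum, vandermonde]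
      rw [show 2*a + 2*(k-a) + 1 = 2*k+1 from by omega]
    rw [Finset.sum_congr rfl h1, ← Finset.sum_mul]
    have : ∑ a ∈ range (k+1), catalan a * catalan (k-a) = catalan (k+1) := by
      rw [catalan_succ']
      rw [Finset.Nat.sum_antidiagonal_eq_sum_range_succ_mk]
    rw [this]
    ring

def dd (e : ℕ) : ℕ → ℕ
  | 0 => 0
  | k+1 => e.choose (2*k+1) * catalan (k+1)

lemma cc_rec (e k : ℕ) : cc (e+1) k = cc e k + dd e k := by
  cases k with
  | zero => simp [cc, dd]
  | succ k' =>
    rw [cc, cc, dd, show 2*(k'+1) = (2*k'+1)+1 from by omega, Nat.choose_succ_succ]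
    ring

lemma Rp_mul (i j : ℕ) : Rp i * Rp j
    = ∑ k ∈ range ((i+j)/2 + 1),
        ((∑ a ∈ range (k+1), cc i a * cc j (k-a) : ℕ) : MvPolynomial (Fin 2) ℤ)
          * X 0 ^ k * X 1 ^ (i + j - 2*k) := by
  rw [Rp, Rp, Finset.sum_mul_sum]
  have step1 : ∀ a ∈ range (i/2+1), ∀ b ∈ range (j/2+1),
      (((cc i a : ℕ) : MvPolynomial (Fin 2) ℤ) * X 0 ^ a * X 1 ^ (i - 2*a))
        * (((cc j b : ℕ) : MvPolynomial (Fin 2) ℤ) * X 0 ^ b * X 1 ^ (j - 2*b))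
      = ((cc i a * cc j b : ℕ) : MvPolynomial (Fin 2) ℤ) * X 0 ^ (a+b)
          * X 1 ^ (i + j - 2*(a+b)) := by
    intro a ha b hb
    rw [mem_range] at ha hb
    rw [show i + j - 2*(a+b) = (i - 2*a) + (j - 2*b) from by omega]
    push_cast
    rw [pow_add, pow_add]
    ring
  rw [Finset.sum_congr rfl (fun a ha => Finset.sum_congr rfl (fun b hb => step1 a ha b hb))]
  rw [← Finset.sum_product']
  rw [Finset.sum_nbij' (i := fun p => (⟨p.1 + p.2, p.1⟩ : Σ _ : ℕ, ℕ))
    (j := fun q => (q.2, q.1 - q.2))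
    (t := (range ((i+j)/2 + 1)).sigma
      (fun k => (range (k+1)).filter (fun a => a ≤ i/2 ∧ k - a ≤ j/2)))
    (g := fun q => ((cc i q.2 * cc j (q.1 - q.2) : ℕ) : MvPolynomial (Fin 2) ℤ)
          * X 0 ^ q.1 * X 1 ^ (i + j - 2*q.1))
    ?hi ?hj ?hli ?hri ?hfg]
  case hi =>
    rintro ⟨a, b⟩ hp
    simp only [Finset.mem_product, mem_range] at hp
    simp only [Finset.mem_sigma, mem_range, Finset.mem_filter]
    omega
  case hj =>
    rintro ⟨k, a⟩ hq
    simp only [Finset.mem_sigma, mem_range, Finset.mem_filter] at hq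
    simp only [Finset.mem_product, mem_range]
    omega
  case hli =>
    rintro ⟨a, b⟩ _
    dsimp only
    simp only [Prod.mk.injEq]
    exact ⟨trivial, by omega⟩
  case hri =>
    rintro ⟨k, a⟩ hq
    simp only [Finset.mem_sigma, mem_range, Finset.mem_filter] at hq
    have : a + (k - a) = k := by omega
    simp only [this]
  case hfg =>
    rintro ⟨a, b⟩ _
    simp only
    rw [show a + b - a = b from by omega]
  rw [Finset.sum_sigma]
  refine Finset.sum_congr rfl fun k hk => ?_
  have hfac : ∀ (s : Finset ℕ), ∑ a ∈ s, ((cc i a * cc j (k - a) : ℕ) : MvPolynomial (Fin 2) ℤ)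
      * X 0 ^ k * X 1 ^ (i + j - 2*k)
      = ((∑ a ∈ s, cc i a * cc j (k-a) : ℕ) : MvPolynomial (Fin 2) ℤ)
          * X 0 ^ k * X 1 ^ (i + j - 2*k) := by
    intro s
    rw [Nat.cast_sum, Finset.sum_mul, Finset.sum_mul]
  rw [hfac]
  have hnat : (∑ a ∈ (range (k+1)).filter (fun a => a ≤ i/2 ∧ k - a ≤ j/2),
      cc i a * cc j (k-a)) = ∑ a ∈ range (k+1), cc i a * cc j (k-a) := by
    refine Finset.sum_subset (Finset.filter_subset _ _) ?_
    intro a ha hna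
    rw [mem_range] at ha
    simp only [Finset.mem_filter, mem_range] at hna
    rcases (by omega : i < 2*a ∨ j < 2*(k-a)) with h | h
    · rw [cc_zero_of i a h, zero_mul]
    · rw [cc_zero_of j (k-a) h, mul_zero]
  rw [hnat]

lemma Rp_zero : Rp 0 = 1 := by
  rw [Rp]
  simp [cc]

lemma Rp_rec (e : ℕ) :
    Rp (e+1) = X 1 * Rp e + X 0 * ∑ i ∈ range e, Rp i * Rp (e-1-i) := by
  have hB : ∑ i ∈ range e, Rp i * Rp (e-1-i)
      = ∑ k ∈ range ((e-1)/2 + 1),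
          ((dd e (k+1) : ℕ) : MvPolynomial (Fin 2) ℤ) * X 0 ^ k * X 1 ^ (e - 1 - 2*k) := by
    have h1 : ∀ i ∈ range e, Rp i * Rp (e-1-i)
        = ∑ k ∈ range ((e-1)/2 + 1),
            ((∑ a ∈ range (k+1), cc i a * cc (e-1-i) (k-a) : ℕ) : MvPolynomial (Fin 2) ℤ)
              * X 0 ^ k * X 1 ^ (e - 1 - 2*k) := by
      intro i hi
      rw [mem_range] at hi
      rw [Rp_mul]
      rw [show i + (e-1-i) = e-1 from by omega]
    rw [Finset.sum_congr rfl h1, Finset.sum_comm]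
    refine Finset.sum_congr rfl fun k hk => ?_
    rw [← Finset.sum_mul, ← Finset.sum_mul, ← Nat.cast_sum]
    rw [show (∑ i ∈ range e, ∑ a ∈ range (k+1), cc i a * cc (e-1-i) (k-a)) = dd e (k+1) from
      by rw [Dval]; rfl]
  rw [hB]
  -- shift index in the second sum
  rw [Finset.mul_sum]
  have hshift : ∑ k ∈ range ((e-1)/2 + 1),
      (X 0 : MvPolynomial (Fin 2) ℤ) * (((dd e (k+1) : ℕ) : MvPolynomial (Fin 2) ℤ)
        * X 0 ^ k * X 1 ^ (e - 1 - 2*k))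
      = ∑ k ∈ range ((e-1)/2 + 2),
          ((dd e k : ℕ) : MvPolynomial (Fin 2) ℤ) * X 0 ^ k * X 1 ^ (e + 1 - 2*k) := by
    rw [Finset.sum_range_succ' (fun k => ((dd e k : ℕ) : MvPolynomial (Fin 2) ℤ)
      * X 0 ^ k * X 1 ^ (e + 1 - 2*k)) ((e-1)/2 + 1)]
    have : ((dd e 0 : ℕ) : MvPolynomial (Fin 2) ℤ) * X 0 ^ 0 * X 1 ^ (e + 1 - 2*0) = 0 := by
      rw [dd]; simp
    rw [this, add_zero]
    refine Finset.sum_congr rfl fun k hk => ?_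
    rw [show e + 1 - 2*(k+1) = e - 1 - 2*k from by omega, pow_succ]
    ring
  rw [hshift]
  -- rewrite v * Rp e
  have hA : (X 1 : MvPolynomial (Fin 2) ℤ) * Rp e
      = ∑ k ∈ range (e/2 + 1), ((cc e k : ℕ) : MvPolynomial (Fin 2) ℤ) * X 0 ^ k
          * X 1 ^ (e + 1 - 2*k) := by
    rw [Rp, Finset.mul_sum]
    refine Finset.sum_congr rfl fun k hk => ?_
    rw [mem_range] at hk
    rw [show e + 1 - 2*k = (e - 2*k) + 1 from by omega, pow_succ]
    ring
  rw [hA, Rp]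
  -- extend all sums to range (e/2 + 2)
  have hext : ∀ (L : ℕ) (f : ℕ → ℕ), L ≤ e/2 + 2 → (∀ k, L ≤ k → k < e/2+2 → f k = 0) →
      ∑ k ∈ range L, ((f k : ℕ) : MvPolynomial (Fin 2) ℤ) * X 0 ^ k * X 1 ^ (e + 1 - 2*k)
      = ∑ k ∈ range (e/2 + 2), ((f k : ℕ) : MvPolynomial (Fin 2) ℤ) * X 0 ^ k
          * X 1 ^ (e + 1 - 2*k) := by
    intro L f hL hf
    refine Finset.sum_subset (by intro x hx; rw [mem_range] at *; omega) ?_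
    intro k hk hnk
    rw [mem_range] at hk
    rw [mem_range] at hnk
    rw [hf k (by omega) hk]
    simp
  rw [hext ((e+1)/2+1) (cc (e+1)) (by omega)
    (fun k h1 h2 => cc_zero_of (e+1) k (by omega)),
    hext (e/2+1) (cc e) (by omega) (fun k h1 h2 => cc_zero_of e k (by omega)),
    hext ((e-1)/2+2) (dd e) (by omega) ?hdz]
  case hdz =>
    intro k h1 h2
    match k, h1 with
    | k'+1, h1 =>
      rw [dd, Nat.choose_eq_zero_of_lt (by omega), zero_mul]
  rw [← Finset.sum_add_distrib]
  refine Finset.sum_congr rfl fun k hk => ?_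
  rw [cc_rec]
  push_cast
  ring

lemma Q_eq_Rp (Q : ℕ → MvPolynomial (Fin 2) ℤ) (h0 : Q 0 = 1)
    (hs : ∀ e, Q (e+1) = ∑ c ∈ range (e+1),
      (if c = 0 then X 1 else X 0 * Q (c-1)) * Q (e-c)) :
    ∀ e, Q e = Rp e := by
  intro e
  induction e using Nat.strong_induction_on with
  | _ e IH =>
  match e with
  | 0 => rw [h0, Rp_zero]
  | e+1 =>
    rw [hs e]
    rw [Finset.sum_range_succ' (fun c => (if c = 0 then (X 1 : MvPolynomial (Fin 2) ℤ)
      else X 0 * Q (c-1)) * Q (e-c)) e]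
    simp only [if_neg (Nat.succ_ne_zero _), if_true, Nat.sub_zero, Nat.add_sub_cancel]
    have h1 : ∀ c ∈ range e, (X 0 : MvPolynomial (Fin 2) ℤ) * Q c * Q (e-(c+1))
        = X 0 * (Rp c * Rp (e-1-c)) := by
      intro c hc
      rw [mem_range] at hc
      rw [show e-(c+1) = e-1-c from by omega]
      rw [IH c (by omega), IH (e-1-c) (by omega)]
      ring
    rw [Finset.sum_congr rfl h1, ← Finset.mul_sum, IH e (by omega)]
    rw [Rp_rec]
    ring

end LTree

open MvPolynomial in
/-- **Theorem (generating function of tip-augmented plane trees).**  For `n ≥ 0`,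
`Σ_{T ∈ 𝒜_{n+1}} u^{oleaf(T)} v^{yleaf(T)} = Σ_{k=0}^{⌊n/2⌋} C(n,2k)·Catalan(k)·u^{k+1} v^{n-2k}`
where `𝒜_{n+1}` is the set of tip-augmented plane trees with `n+1` edges.
Here `u = X 0`, `v = X 1` in `ℤ[u,v]`. -/
theorem tip_augmented_plane_tree_motzkin
    (n : ℕ) (An : Finset LTree)
    (hAn : ∀ T, T ∈ An ↔ (LTree.IsPlane (n + 1) T ∧ LTree.yint T = 0)) :
    ∑ T ∈ An, (X 0 : MvPolynomial (Fin 2) ℤ) ^ LTree.oleaf T * X 1 ^ LTree.yleaf T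
      = ∑ k ∈ Finset.range (n / 2 + 1),
          ((n.choose (2 * k) * catalan k : ℕ) : MvPolynomial (Fin 2) ℤ) *
            X 0 ^ (k + 1) * X 1 ^ (n - 2 * k) := by
  classical
  have hAB : An = LTree.Bset (n+1) := by
    ext T
    rw [hAn T, (LTree.memBL (n+1)).1 T]
    constructor
    · rintro ⟨⟨h1, h2⟩, h3⟩; exact ⟨h1, h2, h3⟩
    · rintro ⟨h1, h2, h3⟩; exact ⟨⟨h1, h2⟩, h3⟩
  rw [hAB]
  have hw : ∀ T ∈ LTree.Bset (n+1),
      (X 0 : MvPolynomial (Fin 2) ℤ) ^ LTree.oleaf T * X 1 ^ LTree.yleaf T = LTree.w T := by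
    intro T hT
    rw [LTree.Bset] at hT
    simp only [Finset.mem_image] at hT
    obtain ⟨cs, -, rfl⟩ := hT
    rw [LTree.w]
    have : LTree.isLeaf (LTree.node 0 (LTree.leafT :: cs)) = false := rfl
    rw [this]
    simp
  rw [Finset.sum_congr rfl hw, LTree.Bsum_succ n]
  have hQrec : ∀ e, LTree.Q (e+1) = ∑ c ∈ Finset.range (e+1),
      (if c = 0 then (X 1 : MvPolynomial (Fin 2) ℤ) else X 0 * LTree.Q (c-1))
        * LTree.Q (e-c) := by
    intro e
    rw [LTree.Q_succ e]
    refine Finset.sum_congr rfl fun c _ => ?_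
    match c with
    | 0 => rw [LTree.Bsum_zero, if_pos rfl]
    | c'+1 =>
      rw [LTree.Bsum_succ, if_neg (Nat.succ_ne_zero _), show c'+1-1 = c' from rfl]
  have hQ : LTree.Q n = LTree.Rp n := LTree.Q_eq_Rp LTree.Q LTree.Q_zero hQrec n
  rw [hQ, LTree.Rp, Finset.mul_sum]
  refine Finset.sum_congr rfl fun k _ => ?_
  rw [LTree.cc]
  push_cast
  rw [pow_succ]
  ring
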